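/- A Skolem sequence of order t exists only if t ≡ 0 or 1 (mod 4). -/

import Mathlib

/-- A Skolem sequence of order `t`, as a collection of pairs `(u i, v i)`, `1 ≤ i ≤ t`,
with `v i - u i = i` whose entries partition `{1, ..., 2t}`. -/
def IsSkolem (t : ℕ) (u v : ℕ → ℕ) : Prop :=
  (∀ i ∈ Finset.Icc 1 t, v i = u i + i) ∧
  (Finset.Icc 1 t).val.bind (fun i => ({u i, v i} : Multiset ℕ)) =
    (Finset.Icc 1 (2 * t)).val

lemma gauss_aux (n : ℕ) : 2 * ∑ i ∈ Finset.Icc 1 n, i = n * (n + 1) := by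
  induction n with
  | zero => simp
  | succ n ih =>
    rw [Finset.sum_Icc_succ_top (by omega)]
    nlinarith [ih]

/-- A Skolem sequence of order `t` exists only if `t ≡ 0` or `1 (mod 4)`. -/
theorem stmt_2 (t : ℕ) (u v : ℕ → ℕ) (h : IsSkolem t u v) :
    t % 4 = 0 ∨ t % 4 = 1 := by
  obtain ⟨h1, h2⟩ := h
  have hsum := congrArg Multiset.sum h2
  rw [Multiset.sum_bind] at hsum
  have hl : ((Finset.Icc 1 t).val.map (fun i => ({u i, v i} : Multiset ℕ).sum)).sum
      = ∑ i ∈ Finset.Icc 1 t, (u i + v i) := by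
    rw [Finset.sum]
    exact congrArg Multiset.sum (Multiset.map_congr rfl
      (fun i _ => by simp [Multiset.insert_eq_cons]))
  have hr : (Finset.Icc 1 (2*t)).val.sum = ∑ i ∈ Finset.Icc 1 (2*t), i := by
    rw [Finset.sum, Multiset.map_id']
  rw [hl, hr] at hsum
  have hsum2 : (∑ i ∈ Finset.Icc 1 t, (2 * u i + i)) = ∑ i ∈ Finset.Icc 1 (2*t), i := by
    rw [← hsum]
    exact Finset.sum_congr rfl (fun i hi => by rw [h1 i hi]; ring)
  rw [Finset.sum_add_distrib, ← Finset.mul_sum] at hsum2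
  have key : 4 * ∑ i ∈ Finset.Icc 1 t, u i + t * (t + 1) = 2 * t * (2 * t + 1) := by
    have g1 := gauss_aux t
    have g2 := gauss_aux (2 * t)
    nlinarith [hsum2, g1, g2]
  -- pass to ZMod 4
  set S := ∑ i ∈ Finset.Icc 1 t, u i
  have hz : ((t : ZMod 4)) * (t + 1) = 2 * t * (2 * t + 1) := by
    have hc := congrArg (Nat.cast : ℕ → ZMod 4) key
    push_cast at hc
    have h40 : (4 : ZMod 4) = 0 := by decide
    linear_combination hc - (S : ZMod 4) * h40
  have hfin := (by decide : ∀ x : ZMod 4, x * (x + 1) = 2 * x * (2 * x + 1) → x = 0 ∨ x = 1)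
    (t : ZMod 4) hz
  have hval : ((t : ZMod 4)).val = t % 4 := ZMod.val_natCast (n := 4) t
  rcases hfin with hx | hx <;> [left; right] <;> rw [← hval, hx] <;> rfl
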